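/- The exponential generating function coefficients of labelled rooted trees, u(n) = n^(n-1)/n! for n ≥ 1 and u(0) = 0, satisfy the nonlinear recursion n·u(n+1) = sum_{k=0}^{n-1} (k+1)·u(k+1)·u(n-k) for all n ≥ 1, with u(1) = 1. -/

import Mathlib

open Finset


/-- Alternating binomial sums annihilate powers of degree `< m`. -/
lemma lemA : ∀ j m : ℕ, j < m →
    ∑ r ∈ range (m+1), (-1:ℚ)^(m-r) * (m.choose r) * (r:ℚ)^j = 0 := by
  intro j
  induction j using Nat.strong_induction_on with
  | _ j IH =>
    intro m hjm
    match j with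
    | 0 =>
      have hm : m ≠ 0 := by omega
      have key : ∑ r ∈ range (m+1), (-1:ℤ)^r * (m.choose r) = 0 := by
        simpa [hm] using (Int.alternating_sum_range_choose (n := m))
      have : ∑ r ∈ range (m+1), (-1:ℚ)^(m-r) * (m.choose r) * (r:ℚ)^0
          = (-1:ℚ)^m * ∑ r ∈ range (m+1), (-1:ℚ)^r * (m.choose r) := by
        rw [mul_sum]
        refine sum_congr rfl fun r hr => ?_
        rw [mem_range] at hr
        have hrm : r ≤ m := by omega
        have : (-1:ℚ)^(m-r) * (-1:ℚ)^r = (-1:ℚ)^m := by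
          rw [← pow_add]; congr 1; omega
        rw [pow_zero, mul_one]
        calc (-1:ℚ)^(m-r) * (m.choose r)
            = ((-1:ℚ)^(m-r) * (-1:ℚ)^r) * ((-1:ℚ)^r * (m.choose r)) := by
              rw [← mul_assoc, mul_assoc ((-1:ℚ)^(m-r))]
              rw [← pow_add, ← two_mul, pow_mul]
              norm_num
          _ = (-1:ℚ)^m * ((-1:ℚ)^r * (m.choose r)) := by rw [this]
      rw [this]
      have : ((∑ r ∈ range (m+1), (-1:ℤ)^r * (m.choose r) : ℤ) : ℚ) = 0 := by
        rw [key]; norm_num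
      push_cast at this
      rw [this, mul_zero]
    | (t+1) =>
      -- m ≥ t + 2
      obtain ⟨m', rfl⟩ : ∃ m', m = m' + 1 := ⟨m - 1, by omega⟩
      rw [Finset.sum_range_succ']
      have h0 : (-1:ℚ)^(m'+1-0) * ((m'+1).choose 0) * ((0:ℕ):ℚ)^(t+1) = 0 := by
        norm_num
      rw [h0, add_zero]
      have step : ∀ r ∈ range (m'+1),
          (-1:ℚ)^(m'+1-(r+1)) * ((m'+1).choose (r+1)) * ((r+1:ℕ):ℚ)^(t+1)
          = ∑ s ∈ range (t+1), (t.choose s) *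
              ((m'+1) * ((-1:ℚ)^(m'-r) * (m'.choose r) * (r:ℚ)^s)) := by
        intro r hr
        rw [mem_range] at hr
        have hsub : m' + 1 - (r+1) = m' - r := by omega
        have hcast : ((r:ℚ)+1)^(t+1) = ((r:ℚ)+1) * ((r:ℚ)+1)^t := by ring
        have hchoose : ((m'+1).choose (r+1) : ℚ) * ((r:ℚ)+1) = (m'+1) * (m'.choose r) := by
          have := Nat.add_one_mul_choose_eq m' r
          have : ((m'+1) * m'.choose r : ℕ) = ((m'+1).choose (r+1) * (r+1) : ℕ) := this
          exact_mod_cast congrArg (Nat.cast (R := ℚ)) this.symm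
        have hbin : ((r:ℚ)+1)^t = ∑ s ∈ range (t+1), (r:ℚ)^s * (t.choose s) := by
          have := add_pow (r:ℚ) 1 t
          simpa using this
        push_cast
        rw [hcast, hbin, mul_sum]
        rw [Finset.mul_sum]
        refine sum_congr rfl fun s hs => ?_
        have : ((m'+1).choose (r+1) : ℚ) * ((r:ℚ)+1) = ((m':ℚ)+1) * (m'.choose r) := by
          exact_mod_cast hchoose
        calc (-1:ℚ)^(m'-r) * ((m'+1).choose (r+1)) * (((r:ℚ)+1) * ((r:ℚ)^s * (t.choose s)))
            = ((-1:ℚ)^(m'-r)) * (((m'+1).choose (r+1) : ℚ) * ((r:ℚ)+1)) * ((r:ℚ)^s * (t.choose s)) := by ring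
          _ = ((-1:ℚ)^(m'-r)) * (((m':ℚ)+1) * (m'.choose r)) * ((r:ℚ)^s * (t.choose s)) := by rw [this]
          _ = (t.choose s) * (((m':ℚ)+1) * ((-1:ℚ)^(m'-r) * (m'.choose r) * (r:ℚ)^s)) := by ring
      rw [sum_congr rfl step, Finset.sum_comm]
      refine Finset.sum_eq_zero fun s hs => ?_
      rw [mem_range] at hs
      rw [← Finset.mul_sum, ← Finset.mul_sum]
      have : ∑ r ∈ range (m'+1), (-1:ℚ)^(m'-r) * (m'.choose r) * (r:ℚ)^s = 0 :=
        IH s (by omega) m' (by omega)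
      rw [this, mul_zero, mul_zero]


lemma lemB (m : ℕ) (hm : 2 ≤ m) :
    ∑ q ∈ range m, (-1:ℚ)^q * (m.choose q) * ((m-q : ℕ):ℚ)^(m-1) = 0 := by
  have hA := lemA (m-1) m (by omega)
  rw [Finset.sum_range_succ'] at hA
  have h0 : (-1:ℚ)^(m-0) * (m.choose 0) * ((0:ℕ):ℚ)^(m-1) = 0 := by
    have : ((0:ℕ):ℚ)^(m-1) = 0 := by
      rw [Nat.cast_zero, zero_pow]; omega
    rw [this, mul_zero]
  rw [h0, add_zero] at hA
  -- hA : ∑ r ∈ range m, (-1)^(m-(r+1)) * C(m,r+1) * (r+1)^(m-1) = 0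
  have hrefl := Finset.sum_range_reflect
    (fun r => (-1:ℚ)^(m-(r+1)) * (m.choose (r+1)) * ((r+1:ℕ):ℚ)^(m-1)) m
  rw [hA] at hrefl
  rw [← hrefl]
  refine Finset.sum_congr rfl fun q hq => ?_
  rw [mem_range] at hq
  have e1 : m - (m - 1 - q + 1) = q := by omega
  have e2 : m - 1 - q + 1 = m - q := by omega
  rw [e1, e2]
  have e3 : m.choose (m - q) = m.choose q := Nat.choose_symm (by omega)
  rw [e3]

lemma lemG (n : ℕ) (hn : 1 ≤ n) :
    ∑ i ∈ range n, (n.choose i : ℚ) * ((i:ℚ)+1)^i * ((n-i : ℕ):ℚ)^(n-i-1)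
      = (n:ℚ) * ((n:ℚ)+1)^(n-1) := by
  -- Step 1: binomial expansion of each term
  have step1 : ∀ i ∈ range n,
      (n.choose i : ℚ) * ((i:ℚ)+1)^i * ((n-i : ℕ):ℚ)^(n-i-1)
      = ∑ j ∈ range n, (n.choose i : ℚ) * (i.choose j) * (-1:ℚ)^(i-j)
          * ((n:ℚ)+1)^j * ((n-i : ℕ):ℚ)^(n-1-j) := by
    intro i hi
    rw [mem_range] at hi
    have hbase : ((i:ℚ)+1) = (((n:ℚ)+1) - ((n-i : ℕ):ℚ)) := by
      have : ((n-i : ℕ):ℚ) = (n:ℚ) - (i:ℚ) := by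
        rw [Nat.cast_sub (by omega)]
      rw [this]; ring
    rw [hbase, sub_pow]
    rw [Finset.mul_sum, Finset.sum_mul]
    rw [← Finset.sum_subset (Finset.range_subset_range.mpr (by omega : i + 1 ≤ n))
      (fun j hj hj' => ?_)]
    · refine Finset.sum_congr rfl fun j hj => ?_
      rw [mem_range] at hj
      have hsign : (-1:ℚ)^(j+i) = (-1:ℚ)^(i-j) := by
        have : j + i = (i - j) + 2*j := by omega
        rw [this, pow_add, pow_mul]; norm_num
      have hpow : ((n-i : ℕ):ℚ)^(i-j) * ((n-i : ℕ):ℚ)^(n-i-1) = ((n-i : ℕ):ℚ)^(n-1-j) := by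
        rw [← pow_add]; congr 1; omega
      calc (n.choose i : ℚ) * ((-1:ℚ)^(j+i) * ((n:ℚ)+1)^j * ((n-i : ℕ):ℚ)^(i-j) * (i.choose j))
              * ((n-i : ℕ):ℚ)^(n-i-1)
          = (n.choose i : ℚ) * (i.choose j) * (-1:ℚ)^(j+i) * ((n:ℚ)+1)^j
              * (((n-i : ℕ):ℚ)^(i-j) * ((n-i : ℕ):ℚ)^(n-i-1)) := by ring
        _ = (n.choose i : ℚ) * (i.choose j) * (-1:ℚ)^(i-j) * ((n:ℚ)+1)^j
              * ((n-i : ℕ):ℚ)^(n-1-j) := by rw [hsign, hpow]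
    · -- terms with i < j < n vanish
      rw [mem_range] at hj hj'
      have : i.choose j = 0 := Nat.choose_eq_zero_of_lt (by omega)
      rw [this]
      norm_num
  rw [Finset.sum_congr rfl step1, Finset.sum_comm]
  -- Step 2: inner sums
  have step2 : ∀ j ∈ range n,
      ∑ i ∈ range n, (n.choose i : ℚ) * (i.choose j) * (-1:ℚ)^(i-j)
          * ((n:ℚ)+1)^j * ((n-i : ℕ):ℚ)^(n-1-j)
      = (n.choose j : ℚ) * ((n:ℚ)+1)^j *
          ∑ q ∈ range (n-j), (-1:ℚ)^q * ((n-j).choose q) * ((n-j-q : ℕ):ℚ)^(n-j-1) := by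
    intro j hj
    rw [mem_range] at hj
    rw [Finset.mul_sum]
    have drop : ∑ i ∈ range n, (n.choose i : ℚ) * (i.choose j) * (-1:ℚ)^(i-j)
          * ((n:ℚ)+1)^j * ((n-i : ℕ):ℚ)^(n-1-j)
        = ∑ i ∈ Ico j n, (n.choose i : ℚ) * (i.choose j) * (-1:ℚ)^(i-j)
          * ((n:ℚ)+1)^j * ((n-i : ℕ):ℚ)^(n-1-j) := by
      refine (Finset.sum_subset (fun x hx => ?_) (fun x hx hx' => ?_)).symm
      · rw [mem_Ico] at hx; rw [mem_range]; omega
      · rw [mem_range] at hx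
        rw [mem_Ico, not_and_or] at hx'
        have : x < j := by omega
        have hz : x.choose j = 0 := Nat.choose_eq_zero_of_lt this
        rw [hz]; norm_num
    rw [drop, Finset.sum_Ico_eq_sum_range]
    refine Finset.sum_congr rfl fun q hq => ?_
    rw [mem_range] at hq
    have hq' : j + q ≤ n := by omega
    have hcm : (n.choose (j+q) : ℚ) * ((j+q).choose j) = (n.choose j : ℚ) * ((n-j).choose q) := by
      have := Nat.choose_mul (n := n) (k := j+q) (s := j) (by omega)
      have h2 : (j+q) - j = q := by omega
      rw [h2] at this
      exact_mod_cast congrArg (Nat.cast (R := ℚ)) this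
    have e1 : j + q - j = q := by omega
    have e2 : n - (j + q) = n - j - q := by omega
    have e3 : n - 1 - j = n - j - 1 := by omega
    rw [e1, e2, e3]
    calc (n.choose (j+q) : ℚ) * ((j+q).choose j) * (-1:ℚ)^q * ((n:ℚ)+1)^j
            * ((n-j-q : ℕ):ℚ)^(n-j-1)
        = ((n.choose (j+q) : ℚ) * ((j+q).choose j)) * ((-1:ℚ)^q * ((n:ℚ)+1)^j
            * ((n-j-q : ℕ):ℚ)^(n-j-1)) := by ring
      _ = ((n.choose j : ℚ) * ((n-j).choose q)) * ((-1:ℚ)^q * ((n:ℚ)+1)^j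
            * ((n-j-q : ℕ):ℚ)^(n-j-1)) := by rw [hcm]
      _ = (n.choose j : ℚ) * ((n:ℚ)+1)^j
            * ((-1:ℚ)^q * ((n-j).choose q) * ((n-j-q : ℕ):ℚ)^(n-j-1)) := by ring
  rw [Finset.sum_congr rfl step2]
  -- Step 3: all terms vanish except j = n-1
  rw [Finset.sum_eq_single (n-1) (fun j hj hj' => ?_) (fun h => absurd (Finset.mem_range.mpr (by omega)) h)]
  · have e1 : n - (n-1) = 1 := by omega
    rw [e1]
    rw [Finset.sum_range_one]
    have : (n.choose (n-1) : ℚ) = n := by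
      have : n.choose (n-1) = n := by
        have h1 : n - (n-1) = 1 := by omega
        have := Nat.choose_symm (n := n) (k := n-1) (by omega)
        rw [h1] at this
        rw [← this, Nat.choose_one_right]
      exact_mod_cast this
    rw [this]
    norm_num
  · rw [mem_range] at hj
    have h2 : 2 ≤ n - j := by omega
    rw [lemB (n-j) h2, mul_zero]


/-- The EGF coefficients of labelled rooted trees, `u n = n^(n-1)/n!` for `n ≥ 1`
and `u 0 = 0`, satisfy `u 1 = 1` and the nonlinear recursion
`n · u(n+1) = ∑_{k=0}^{n-1} (k+1) u(k+1) u(n-k)` for all `n ≥ 1`. -/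
theorem stmt_12 (u : ℕ → ℚ) (h0 : u 0 = 0)
    (h : ∀ n : ℕ, 1 ≤ n → u n = (n : ℚ) ^ (n - 1) / (Nat.factorial n : ℚ)) :
    u 1 = 1 ∧ ∀ n : ℕ, 1 ≤ n →
      (n : ℚ) * u (n + 1)
        = ∑ k ∈ Finset.range n, ((k : ℚ) + 1) * u (k + 1) * u (n - k) := by
  constructor
  · rw [h 1 le_rfl]; norm_num
  · intro n hn
    have hterm : ∀ k ∈ range n, ((k:ℚ)+1) * u (k+1) * u (n-k)
        = (n.choose k : ℚ) * ((k:ℚ)+1)^k * ((n-k:ℕ):ℚ)^(n-k-1) / (n.factorial : ℚ) := by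
      intro k hk
      rw [mem_range] at hk
      rw [h (k+1) (by omega), h (n-k) (by omega)]
      have e1 : k + 1 - 1 = k := rfl
      rw [e1]
      have hc : (n.choose k : ℚ)
          = (n.factorial : ℚ) / ((k.factorial : ℚ) * ((n-k).factorial : ℚ)) := by
        rw [Nat.cast_choose ℚ (le_of_lt hk)]
      have hfk : ((k+1).factorial : ℚ) = ((k:ℚ)+1) * (k.factorial : ℚ) := by
        rw [Nat.factorial_succ]; push_cast; ring
      have nz1 : (k.factorial : ℚ) ≠ 0 := Nat.cast_ne_zero.mpr (Nat.factorial_ne_zero _)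
      have nz2 : ((n-k).factorial : ℚ) ≠ 0 := Nat.cast_ne_zero.mpr (Nat.factorial_ne_zero _)
      have nz3 : (n.factorial : ℚ) ≠ 0 := Nat.cast_ne_zero.mpr (Nat.factorial_ne_zero _)
      have nz4 : ((k:ℚ)+1) ≠ 0 := by positivity
      rw [hc, hfk]
      push_cast
      field_simp
    rw [Finset.sum_congr rfl hterm, ← Finset.sum_div, lemG n hn]
    rw [h (n+1) (by omega)]
    have e2 : n + 1 - 1 = n := rfl
    rw [e2]
    have hfn : ((n+1).factorial : ℚ) = ((n:ℚ)+1) * (n.factorial : ℚ) := by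
      rw [Nat.factorial_succ]; push_cast; ring
    have hpow : ((n:ℚ)+1)^n = ((n:ℚ)+1)^(n-1) * ((n:ℚ)+1) := by
      rw [← pow_succ]; congr 1; omega
    have nz3 : (n.factorial : ℚ) ≠ 0 := Nat.cast_ne_zero.mpr (Nat.factorial_ne_zero _)
    have nz5 : ((n:ℚ)+1) ≠ 0 := by positivity
    rw [hfn]
    push_cast
    rw [hpow]
    field_simp
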